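/- Let n = 8 and let R = ℂ[ψ_I : I a 4-element subset of {1,…,8}] be the polynomial ring in the 70 variables ψ_I. Then the ideal of R generated by the 32 variables ψ_I with |I ∩ {1,2,3,4}| odd (the level-1 and level-3 variables) together with the single quadric Q_{5678} = −ψ_{1234}·ψ_{5678} + P_{5678} is a prime ideal. (Hence for n = 8 the coupled cluster doubles truncation variety is the degree-2 hypersurface cut out by Q_{5678} inside the linear subspace where all level-1 and level-3 coordinates vanish, and no saturation is needed.) -/

import Mathlib

open MvPolynomial

/-- Index type of the ring `R = ℂ[ψ_I]`: `I` ranges over 4-element subsets of `{1,…,8}`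
(encoded as `Fin 8`). -/
abbrev Idx8 : Type := {I : Finset (Fin 8) // I.card = 4}

/-- The variable `ψ_{A ∪ B}` of `R` (junk value `0` if `(A ∪ B).card ≠ 4`): for `A` a
2-element subset of `{1,2,3,4}` and `B` a 2-element subset of `{5,6,7,8}` this is the
level-2 variable `ψ_{A,B}`. -/
noncomputable def v8 (A B : Finset (Fin 8)) : MvPolynomial Idx8 ℂ :=
  if h : (A ∪ B).card = 4 then X ⟨A ∪ B, h⟩ else 0

/-- The sign of the permutation of `J` listing the elements of `I` in increasing order
followed by those of `J \ I` in increasing order. -/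
def shuffleSign8 (J I : Finset (Fin 8)) : ℤ :=
  (-1) ^ ((I ×ˢ (J \ I)).filter fun p => p.2 < p.1).card

/-- The quadric `P_{5678}` (in the `Fin 8` encoding, `{1,2,3,4} = {0,1,2,3}` and
`{5,6,7,8} = {4,5,6,7}`). -/
noncomputable def P5678 : MvPolynomial Idx8 ℂ :=
  ∑ I ∈ ({4, 5, 6, 7} : Finset (Fin 8)).powersetCard 2,
    (shuffleSign8 {4, 5, 6, 7} I : MvPolynomial Idx8 ℂ) *
      (v8 {0, 1} I * v8 {2, 3} ({4, 5, 6, 7} \ I)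
        - v8 {0, 2} I * v8 {1, 3} ({4, 5, 6, 7} \ I)
        + v8 {0, 3} I * v8 {1, 2} ({4, 5, 6, 7} \ I))

/-- The homogeneous quadric `Q_{5678} = -ψ_{1234}·ψ_{5678} + P_{5678}`. -/
noncomputable def Q5678 : MvPolynomial Idx8 ℂ :=
  - X (⟨{0, 1, 2, 3}, by decide⟩ : Idx8) * X (⟨{4, 5, 6, 7}, by decide⟩ : Idx8) + P5678

-- auxiliary
abbrev b8 : Idx8 := ⟨{4, 5, 6, 7}, by decide⟩
abbrev a8 : Idx8 := ⟨{0, 1, 2, 3}, by decide⟩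

abbrev S8 : Type :=
  {I : Idx8 // ¬ Odd ((I.val ∩ ({0, 1, 2, 3} : Finset (Fin 8))).card) ∧ I ≠ b8}

noncomputable def g8 (I : Idx8) : Polynomial (MvPolynomial S8 ℂ) :=
  if hb : I = b8 then Polynomial.X
  else if h : Odd ((I.val ∩ ({0, 1, 2, 3} : Finset (Fin 8))).card) then 0
  else Polynomial.C (X ⟨I, h, hb⟩)

noncomputable def Φ8 : MvPolynomial Idx8 ℂ →ₐ[ℂ] Polynomial (MvPolynomial S8 ℂ) := aeval g8

noncomputable def rn8 : Polynomial (MvPolynomial S8 ℂ) →+* MvPolynomial Idx8 ℂ :=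
  Polynomial.eval₂RingHom (rename (Subtype.val : S8 → Idx8)).toRingHom (X b8)

lemma rn8_g8_even (i : Idx8) (h : ¬ Odd ((i.val ∩ ({0,1,2,3} : Finset (Fin 8))).card)) :
    rn8 (g8 i) = X i := by
  unfold g8
  by_cases hb : i = b8
  · subst hb; simp [rn8]
  · rw [dif_neg hb, dif_neg h]
    simp [rn8]

lemma g8_odd (i : Idx8) (h : Odd ((i.val ∩ ({0,1,2,3} : Finset (Fin 8))).card)) :
    g8 i = 0 := by
  have hb : i ≠ b8 := by
    rintro rfl
    revert h; decide
  unfold g8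
  rw [dif_neg hb, dif_pos h]

lemma sub_rn8_mem (p : MvPolynomial Idx8 ℂ) :
    p - rn8 (Φ8 p) ∈ Ideal.span
      (Set.range fun I : {I : Idx8 // Odd ((I.val ∩ ({0, 1, 2, 3} : Finset (Fin 8))).card)} =>
        (X I.val : MvPolynomial Idx8 ℂ)) := by
  induction p using MvPolynomial.induction_on with
  | C a => simp [Φ8, rn8]
  | add p q hp hq =>
      have : p + q - rn8 (Φ8 (p + q)) = (p - rn8 (Φ8 p)) + (q - rn8 (Φ8 q)) := by
        rw [map_add, map_add]; ring
      rw [this]; exact Ideal.add_mem _ hp hq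
  | mul_X p i hp =>
      rw [map_mul]
      show p * X i - rn8 (Φ8 p * Φ8 (X i)) ∈ _
      rw [map_mul]
      have hXi : Φ8 (X i) = g8 i := by simp [Φ8]
      by_cases h : Odd ((i.val ∩ ({0,1,2,3} : Finset (Fin 8))).card)
      · rw [hXi, g8_odd i h]
        have : p * X i - rn8 (Φ8 p) * rn8 0 = p * X i := by simp
        rw [this]
        exact Ideal.mul_mem_left _ _ (Ideal.subset_span ⟨⟨i, h⟩, rfl⟩)
      · rw [hXi, rn8_g8_even i h]
        have : p * X i - rn8 (Φ8 p) * X i = (p - rn8 (Φ8 p)) * X i := by ring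
        rw [this]
        exact Ideal.mul_mem_right _ _ hp

def Cond8 (A B : Finset (Fin 8)) : Prop :=
  (A ∪ B).card = 4 ∧ ¬ Odd (((A ∪ B) ∩ ({0,1,2,3} : Finset (Fin 8))).card)
    ∧ A ∪ B ≠ ({4,5,6,7} : Finset (Fin 8))

instance (A B : Finset (Fin 8)) : Decidable (Cond8 A B) := by unfold Cond8; infer_instance

noncomputable def w8 (A B : Finset (Fin 8)) : MvPolynomial S8 ℂ :=
  if h : Cond8 A B then
    X ⟨⟨A ∪ B, h.1⟩, h.2.1, fun hh => h.2.2 (congrArg Subtype.val hh)⟩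
  else 0

lemma Φ8_v8 {A B : Finset (Fin 8)} (h : Cond8 A B) :
    Φ8 (v8 A B) = Polynomial.C (w8 A B) := by
  unfold v8 w8
  rw [dif_pos h.1, dif_pos h]
  have : Φ8 (X (⟨A ∪ B, h.1⟩ : Idx8)) = g8 ⟨A ∪ B, h.1⟩ := by simp [Φ8]
  rw [this]
  unfold g8
  rw [dif_neg (fun hh => h.2.2 (congrArg Subtype.val hh)), dif_neg h.2.1]

noncomputable def q8 : MvPolynomial S8 ℂ :=
  ∑ I ∈ ({4, 5, 6, 7} : Finset (Fin 8)).powersetCard 2,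
    (shuffleSign8 {4, 5, 6, 7} I : MvPolynomial S8 ℂ) *
      (w8 {0, 1} I * w8 {2, 3} ({4, 5, 6, 7} \ I)
        - w8 {0, 2} I * w8 {1, 3} ({4, 5, 6, 7} \ I)
        + w8 {0, 3} I * w8 {1, 2} ({4, 5, 6, 7} \ I))

set_option maxRecDepth 10000 in
lemma Φ8_P : Φ8 P5678 = Polynomial.C q8 := by
  unfold P5678 q8
  rw [map_sum, map_sum]
  refine Finset.sum_congr rfl fun I hI => ?_
  have H : ∀ I ∈ ({4, 5, 6, 7} : Finset (Fin 8)).powersetCard 2,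
      Cond8 {0,1} I ∧ Cond8 {2,3} ({4,5,6,7} \ I) ∧ Cond8 {0,2} I ∧
      Cond8 {1,3} ({4,5,6,7} \ I) ∧ Cond8 {0,3} I ∧ Cond8 {1,2} ({4,5,6,7} \ I) := by decide
  obtain ⟨h1, h2, h3, h4, h5, h6⟩ := H I hI
  rw [map_mul, map_add, map_sub, map_mul, map_mul, map_mul,
    Φ8_v8 h1, Φ8_v8 h2, Φ8_v8 h3, Φ8_v8 h4, Φ8_v8 h5, Φ8_v8 h6]
  rw [map_mul, map_add, map_sub, map_mul, map_mul, map_mul, map_intCast, map_intCast]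

lemma Φ8_Q : Φ8 Q5678 =
    Polynomial.C (-(X (⟨a8, by decide⟩ : S8) : MvPolynomial S8 ℂ)) * Polynomial.X
      + Polynomial.C q8 := by
  unfold Q5678
  rw [map_add, Φ8_P, map_mul, map_neg]
  have ha : Φ8 (X a8) = Polynomial.C (X (⟨a8, by decide⟩ : S8)) := by
    show Φ8 (X a8) = _
    have : Φ8 (X a8) = g8 a8 := by simp [Φ8]
    rw [this]
    unfold g8
    rw [dif_neg (by decide), dif_neg (by decide)]
  have hb : Φ8 (X b8) = Polynomial.X := by
    have : Φ8 (X b8) = g8 b8 := by simp [Φ8]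
    rw [this]; unfold g8; rw [dif_pos rfl]
  show -Φ8 (X a8) * Φ8 (X b8) + Polynomial.C q8 = _
  rw [ha, hb, map_neg]

def ptS : S8 → ℂ := fun s =>
  if s.val.val = ({0,1,4,5} : Finset (Fin 8)) ∨ s.val.val = ({2,3,6,7} : Finset (Fin 8))
  then 1 else 0

set_option maxRecDepth 10000 in
lemma eval_q8 : aeval ptS q8 = 1 := by
  have hpows : (({4,5,6,7} : Finset (Fin 8)).powersetCard 2)
      = {{4,5},{4,6},{4,7},{5,6},{5,7},{6,7}} := by decide
  rw [q8, hpows]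
  simp (config := { decide := true }) [Finset.sum_insert, Finset.mem_insert, w8, shuffleSign8,
    ptS]

theorem mvPrimeX {σ : Type*} {R : Type*} [CommRing R] [IsDomain R] (i : σ) :
    Prime (MvPolynomial.X i : MvPolynomial σ R) := by
  classical
  have h : (MvPolynomial.X i : MvPolynomial σ R)
      = rename (Subtype.val : ({i} : Set σ) → σ) (MvPolynomial.X ⟨i, rfl⟩) := by simp
  rw [h, prime_rename_iff]
  let e : MvPolynomial ({i} : Set σ) R ≃ₐ[R] Polynomial R :=
    (renameEquiv R (Equiv.equivPUnit.{_,1} ({i} : Set σ))).trans (pUnitAlgEquiv R)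
  rw [← MulEquiv.prime_iff e.toMulEquiv]
  have he : e (MvPolynomial.X ⟨i, rfl⟩) = Polynomial.X := by
    simp [e]
  show Prime (e (MvPolynomial.X ⟨i, rfl⟩))
  rw [he]
  exact Polynomial.prime_X

theorem prime_linear {D : Type*} [CommRing D] [IsDomain D] [UniqueFactorizationMonoid D]
    {a b : D} (ha : Prime a) (hab : ¬ a ∣ b) :
    Prime (Polynomial.C a * Polynomial.X + Polynomial.C b) := by
  have hprim : (Polynomial.C a * Polynomial.X + Polynomial.C b).IsPrimitive := by
    intro r hr
    rw [Polynomial.C_dvd_iff_dvd_coeff] at hr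
    have h1 : r ∣ a := by simpa using hr 1
    have h0 : r ∣ b := by simpa using hr 0
    obtain ⟨s, rfl⟩ := h1
    rcases ha.irreducible.isUnit_or_isUnit rfl with h | h
    · exact h
    · exact absurd ((h.mul_right_dvd.mpr dvd_rfl).trans h0) hab
  rw [← UniqueFactorizationMonoid.irreducible_iff_prime]
  refine hprim.irreducible_of_irreducible_map_of_injective
    (IsFractionRing.injective D (FractionRing D)) ?_
  have hmap : (Polynomial.C a * Polynomial.X + Polynomial.C b).map
      (algebraMap D (FractionRing D))
      = Polynomial.C (algebraMap D (FractionRing D) a) * Polynomial.X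
        + Polynomial.C (algebraMap D (FractionRing D) b) := by
    simp
  rw [hmap]
  refine Polynomial.irreducible_of_degree_eq_one (Polynomial.degree_linear ?_)
  simpa using (map_ne_zero_iff _ (IsFractionRing.injective D (FractionRing D))).mpr ha.ne_zero

lemma not_X_dvd_q8 : ¬ (X (⟨a8, by decide⟩ : S8) : MvPolynomial S8 ℂ) ∣ q8 := by
  rintro ⟨t, ht⟩
  have h := congrArg (aeval ptS) ht
  rw [eval_q8, map_mul, aeval_X] at h
  have h0 : ptS ⟨a8, by decide⟩ = 0 := by
    unfold ptS
    rw [if_neg (by decide)]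
  rw [h0, zero_mul] at h
  exact one_ne_zero h

lemma prime_Φ8_Q : Prime (Φ8 Q5678) := by
  rw [Φ8_Q]
  exact prime_linear ((mvPrimeX _).neg) (by rw [neg_dvd]; exact not_X_dvd_q8)


/-- For `n = 8`, the ideal of `R = ℂ[ψ_I]` generated by the level-1 and
level-3 variables (those `ψ_I` with `|I ∩ {1,2,3,4}|` odd) together with the quadric
`Q_{5678}` is prime. -/
theorem span_level13_and_Q5678_isPrime :
    (Ideal.span
      ((Set.range fun I : {I : Idx8 // Odd ((I.val ∩ ({0, 1, 2, 3} : Finset (Fin 8))).card)} =>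
          (X I.val : MvPolynomial Idx8 ℂ)) ∪ {Q5678})).IsPrime := by
  have hmain : Ideal.span
      ((Set.range fun I : {I : Idx8 // Odd ((I.val ∩ ({0, 1, 2, 3} : Finset (Fin 8))).card)} =>
          (X I.val : MvPolynomial Idx8 ℂ)) ∪ {Q5678})
      = Ideal.comap Φ8.toRingHom (Ideal.span {Φ8 Q5678}) := by
    apply le_antisymm
    · rw [Ideal.span_le]
      rintro x (hx | hx)
      · obtain ⟨I, rfl⟩ := hx
        simp only [SetLike.mem_coe, Ideal.mem_comap]
        show Φ8 (X I.val) ∈ _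
        have hg : Φ8 (X I.val) = g8 I.val := by simp [Φ8]
        rw [hg, g8_odd _ I.2]
        exact Ideal.zero_mem _
      · rw [hx]
        simp only [SetLike.mem_coe, Ideal.mem_comap]
        exact Ideal.subset_span rfl
    · intro p hp
      rw [Ideal.mem_comap] at hp
      obtain ⟨c, hc⟩ := Ideal.mem_span_singleton'.mp hp
      have h1 := sub_rn8_mem p
      have h2 := sub_rn8_mem Q5678
      have hAle : Ideal.span
          (Set.range fun I : {I : Idx8 //
              Odd ((I.val ∩ ({0, 1, 2, 3} : Finset (Fin 8))).card)} =>
            (X I.val : MvPolynomial Idx8 ℂ)) ≤ Ideal.span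
          ((Set.range fun I : {I : Idx8 //
              Odd ((I.val ∩ ({0, 1, 2, 3} : Finset (Fin 8))).card)} =>
            (X I.val : MvPolynomial Idx8 ℂ)) ∪ {Q5678}) :=
        Ideal.span_mono (Set.subset_union_left)
      have hQ : Q5678 ∈ Ideal.span
          ((Set.range fun I : {I : Idx8 //
              Odd ((I.val ∩ ({0, 1, 2, 3} : Finset (Fin 8))).card)} =>
            (X I.val : MvPolynomial Idx8 ℂ)) ∪ {Q5678}) :=
        Ideal.subset_span (Or.inr rfl)
      have key : p = (p - rn8 (Φ8 p)) + rn8 c * Q5678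
          - rn8 c * (Q5678 - rn8 (Φ8 Q5678)) := by
        have h3 : rn8 (Φ8 p) = rn8 c * rn8 (Φ8 Q5678) := by
          have hc' : c * Φ8 Q5678 = Φ8 p := hc
          rw [← hc', map_mul]
        rw [h3]; ring
      rw [key]
      exact Ideal.sub_mem _ (Ideal.add_mem _ (hAle h1) (Ideal.mul_mem_left _ _ hQ))
        (Ideal.mul_mem_left _ _ (hAle h2))
  rw [hmain]
  have hp : Prime (Φ8 Q5678) := prime_Φ8_Q
  have hsp : (Ideal.span {Φ8 Q5678}).IsPrime :=
    (Ideal.span_singleton_prime hp.ne_zero).mpr hp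
  exact Ideal.comap_isPrime _ _
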